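/- Let A be a unital C*-algebra and H a selfadjoint element of A whose real spectrum is contained in {x : |x| ≥ δ} for some δ > 0. Then H is invertible, the absolute value |H| (defined by the continuous functional calculus applied to x ↦ |x|) is invertible, the map λ ↦ (H² + λ²·1)⁻¹ is Bochner integrable on (0,∞), and (2/π) ∫₀^∞ (H² + λ²·1)⁻¹ dλ = |H|⁻¹. -/

import Mathlib

open MeasureTheory Set

lemma scalar_int {c : ℝ} (hc : 0 < c) :
    ∫ l in Ioi (0:ℝ), (c ^ 2 + l ^ 2)⁻¹ = Real.pi / (2 * c) := by
  have h1 : ∀ l : ℝ, (c ^ 2 + l ^ 2)⁻¹ = c⁻¹ ^ 2 * (1 + (l * c⁻¹) ^ 2)⁻¹ := by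
    intro l
    have h2 : c ^ 2 + l ^ 2 = c ^ 2 * (1 + (l * c⁻¹) ^ 2) := by field_simp
    rw [h2, mul_inv, ← inv_pow]
  simp_rw [h1]
  rw [integral_const_mul, integral_comp_mul_right_Ioi (fun x => (1 + x ^ 2)⁻¹) 0 (inv_pos.mpr hc)]
  simp [Real.arctan_zero]
  field_simp

lemma scalar_integrable {c : ℝ} (hc : 0 < c) :
    Integrable (fun l : ℝ => (c ^ 2 + l ^ 2)⁻¹) := by
  have h1 : ∀ l : ℝ, (c ^ 2 + l ^ 2)⁻¹ = c⁻¹ ^ 2 * (1 + (l / c) ^ 2)⁻¹ := by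
    intro l
    have h2 : c ^ 2 + l ^ 2 = c ^ 2 * (1 + (l / c) ^ 2) := by field_simp
    rw [h2, mul_inv, ← inv_pow]
  simp_rw [h1]
  exact (integrable_inv_one_add_sq.comp_div hc.ne').const_mul _

/-- Let `A` be a unital C*-algebra and `H` a selfadjoint element whose real spectrum is
contained in `{x : |x| ≥ δ}` for some `δ > 0`. Then `H` is invertible, `|H|` (continuous
functional calculus of the absolute value) is invertible, the map `λ ↦ (H² + λ²·1)⁻¹` is
Bochner integrable on `(0,∞)`, and `(2/π) ∫₀^∞ (H² + λ²·1)⁻¹ dλ = |H|⁻¹`. -/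
theorem abs_inv_eq_two_div_pi_integral_resolvent {A : Type*} [CStarAlgebra A]
    (δ : ℝ) (hδ : 0 < δ) (H : A) (hH : IsSelfAdjoint H)
    (hspec : spectrum ℝ H ⊆ {x : ℝ | δ ≤ |x|}) :
    IsUnit H ∧ IsUnit (cfc (fun x : ℝ => |x|) H) ∧
    (∀ l : ℝ, 0 < l → IsUnit (H ^ 2 + l ^ 2 • (1 : A))) ∧
    IntegrableOn (fun l : ℝ => Ring.inverse (H ^ 2 + l ^ 2 • (1 : A))) (Ioi 0) volume ∧
    (2 / Real.pi) • ∫ l in Ioi (0 : ℝ), Ring.inverse (H ^ 2 + l ^ 2 • (1 : A)) =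
      Ring.inverse (cfc (fun x : ℝ => |x|) H) := by
  have hδx : ∀ x ∈ spectrum ℝ H, δ ≤ |x| := fun x hx => hspec hx
  have hsq : ∀ x ∈ spectrum ℝ H, δ ^ 2 ≤ x ^ 2 := by
    intro x hx
    have h := pow_le_pow_left₀ hδ.le (hδx x hx) 2
    rwa [sq_abs] at h
  -- H is a unit
  have h0 : (0:ℝ) ∉ spectrum ℝ H := fun h => by
    have := hδx 0 h; simp at this; linarith
  have hUH : IsUnit H := by
    rwa [← spectrum.zero_notMem_iff ℝ]
  -- |H| is a unit
  have habsne : ∀ x ∈ spectrum ℝ H, |x| ≠ 0 := fun x hx =>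
    (lt_of_lt_of_le hδ (hδx x hx)).ne'
  have hUabs : IsUnit (cfc (fun x : ℝ => |x|) H) :=
    isUnit_cfc _ H continuous_abs.continuousOn hH habsne
  -- H² + l² is cfc
  have hcfc : ∀ l : ℝ, cfc (fun x : ℝ => x ^ 2 + l ^ 2) H = H ^ 2 + l ^ 2 • (1 : A) := by
    intro l
    rw [cfc_add .., cfc_pow_id .., cfc_const _ _, Algebra.algebraMap_eq_smul_one]
  have hne : ∀ l : ℝ, 0 < l → ∀ x ∈ spectrum ℝ H, x ^ 2 + l ^ 2 ≠ 0 := by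
    intro l hl x hx; positivity
  have hUl : ∀ l : ℝ, 0 < l → IsUnit (H ^ 2 + l ^ 2 • (1 : A)) := by
    intro l hl
    rw [← hcfc l]
    exact isUnit_cfc _ H (by fun_prop) hH (hne l hl)
  -- Ring.inverse as cfc
  have hinv : ∀ l : ℝ, 0 < l → Ring.inverse (H ^ 2 + l ^ 2 • (1 : A)) =
      cfc (fun x : ℝ => (x ^ 2 + l ^ 2)⁻¹) H := by
    intro l hl
    rw [← hcfc l, ← cfc_inv _ _ (hne l hl)]
  -- set up continuous map valued function
  set s := spectrum ℝ H with hs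
  have hxs : ∀ x : s, δ ≤ |(x:ℝ)| := fun x => hδx x x.2
  have hxsq : ∀ x : s, δ ^ 2 ≤ (x:ℝ) ^ 2 := fun x => hsq x x.2
  have huncont : Continuous (fun p : ℝ × s => (((p.2:ℝ)) ^ 2 + p.1 ^ 2)⁻¹) := by
    refine Continuous.inv₀ (by fun_prop) fun p => ?_
    nlinarith [hxsq p.2, sq_nonneg p.1, sq_nonneg δ]
  set F : C(ℝ, C(s, ℝ)) := ContinuousMap.curry ⟨_, huncont⟩ with hF
  have hFapp : ∀ (l : ℝ) (x : s), F l x = ((x:ℝ) ^ 2 + l ^ 2)⁻¹ := fun _ _ => rfl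
  -- integrability of F
  have hFbound : ∀ l : ℝ, ‖F l‖ ≤ (δ ^ 2 + l ^ 2)⁻¹ := by
    intro l
    refine (ContinuousMap.norm_le _ (by positivity)).mpr fun x => ?_
    rw [hFapp, Real.norm_eq_abs, abs_inv]
    have h1 : (0:ℝ) < (x:ℝ) ^ 2 + l ^ 2 := by nlinarith [hxsq x, sq_nonneg l]
    rw [abs_of_pos h1]
    exact inv_anti₀ (by positivity) (by have := hxsq x; linarith)
  have hFint : IntegrableOn (fun l => F l) (Ioi 0) volume := by
    refine Integrable.mono' ((scalar_integrable hδ).integrableOn) ?_ ?_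
    · exact (F.continuous.aestronglyMeasurable).restrict
    · exact ae_of_all _ fun l => hFbound l
  -- the star algebra homomorphism as a CLM
  have hφcont : Continuous (cfcHom hH (R := ℝ)) := (cfcHom_isClosedEmbedding hH).continuous
  set L : C(s, ℝ) →L[ℝ] A :=
    { toFun := cfcHom hH (R := ℝ)
      map_add' := map_add _
      map_smul' := map_smul _
      cont := hφcont } with hL
  have hLapp : ∀ f : C(s, ℝ), L f = cfcHom hH (R := ℝ) f := fun _ => rfl
  -- relate integrand to L ∘ F on Ioi 0
  have hinvF : ∀ l ∈ Ioi (0:ℝ), Ring.inverse (H ^ 2 + l ^ 2 • (1 : A)) = L (F l) := by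
    intro l hl
    have hl' : (0:ℝ) < l := hl
    rw [hinv l hl', hLapp]
    rw [cfc_apply (fun x : ℝ => (x ^ 2 + l ^ 2)⁻¹) H hH (Continuous.continuousOn (Continuous.inv₀ (by fun_prop)
      fun x => by positivity))]
    rfl
  -- integrability of the original function
  have hintOn : IntegrableOn (fun l : ℝ => Ring.inverse (H ^ 2 + l ^ 2 • (1 : A)))
      (Ioi 0) volume := by
    refine (IntegrableOn.congr_fun ?_ (fun l hl => (hinvF l hl).symm) measurableSet_Ioi)
    exact (L.integrable_comp hFint)
  refine ⟨hUH, hUabs, hUl, hintOn, ?_⟩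
  -- main integral identity
  have hIeq : ∫ l in Ioi (0:ℝ), Ring.inverse (H ^ 2 + l ^ 2 • (1 : A)) = L (∫ l in Ioi (0:ℝ), F l) := by
    rw [setIntegral_congr_fun measurableSet_Ioi hinvF]
    exact L.integral_comp_comm hFint
  -- compute ∫ F pointwise
  set G : C(s, ℝ) := ⟨fun x => |(x:ℝ)|⁻¹, by
    refine Continuous.inv₀ (by fun_prop) fun x => (lt_of_lt_of_le hδ (hxs x)).ne'⟩ with hG
  have hIF : (∫ l in Ioi (0:ℝ), F l) = (Real.pi / 2) • G := by
    ext x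
    have h1 := (ContinuousMap.evalCLM ℝ x).integral_comp_comm hFint
    have h2 : ∀ l : ℝ, (ContinuousMap.evalCLM ℝ x) (F l) = ((x:ℝ) ^ 2 + l ^ 2)⁻¹ := fun l => rfl
    have hcx : 0 < |(x:ℝ)| := lt_of_lt_of_le hδ (hxs x)
    have h3 : ∫ l in Ioi (0:ℝ), ((x:ℝ) ^ 2 + l ^ 2)⁻¹ = Real.pi / (2 * |(x:ℝ)|) := by
      rw [← sq_abs]; exact scalar_int hcx
    have h4 : (ContinuousMap.evalCLM ℝ x) (∫ l in Ioi (0:ℝ), F l) = Real.pi / (2 * |(x:ℝ)|) := by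
      rw [← h1]; simp_rw [h2]; exact h3
    have h5 : (∫ l in Ioi (0:ℝ), F l) x = Real.pi / (2 * |(x:ℝ)|) := h4
    rw [h5]
    simp [hG, div_eq_mul_inv, mul_inv]
    ring
  rw [hIeq, hIF, L.map_smul, smul_smul]
  have hpi : (2 / Real.pi) * (Real.pi / 2) = 1 := by
    field_simp
  rw [hpi, one_smul, hLapp]
  rw [← cfc_inv _ _ habsne continuous_abs.continuousOn hH]
  rw [cfc_apply (fun x : ℝ => |x|⁻¹) H hH (ContinuousOn.inv₀ continuous_abs.continuousOn habsne)]
  rfl
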